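/- arXiv:0708.1491 — 2 statements merged into one kernel-verified Lean document; each statement's English description precedes it below -/
import Mathlib

section
/- Let n ≥ 4 and let x ∈ 𝒩 belong to a circuit of the counting operator, i.e., s^[l](x) = x for some integer l ≥ 1. Then ∑_{j=0}^{n-1} x_j = n and ∑_{j=0}^{n-1} j · x_j = n; consequently x_0 = ∑_{j=1}^{n-1} (j − 1) · x_j. -/
/-- The counting operator: `countOp n x j` is the number of indices `i` with `x i = j`. -/
def countOp (n : ℕ) (x : Fin n → ℕ) : Fin n → ℕ :=
  fun j => (Finset.univ.filter fun i => x i = (j : ℕ)).card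

/-- `𝒩`: the set of `n`-chains that are neither constant nor injective. -/
def NSet (n : ℕ) : Set (Fin n → ℕ) :=
  {x | (∀ i, x i < n) ∧ (¬ ∃ c, ∀ i, x i = c) ∧ ¬ Function.Injective x}

open Finset

lemma countOp_sum (n : ℕ) (y : Fin n → ℕ) :
    ∑ j : Fin n, countOp n y j = (univ.filter fun i : Fin n => y i < n).card := by
  simp only [countOp, card_filter]
  rw [Finset.sum_comm]
  refine Finset.sum_congr rfl fun i _ => ?_
  rw [Fin.sum_univ_eq_sum_range (fun j => if y i = j then 1 else 0) n,
      Finset.sum_ite_eq (Finset.range n) (y i) (fun _ => 1)]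
  simp [Finset.mem_range]

lemma countOp_wsum (n : ℕ) (y : Fin n → ℕ) :
    ∑ j : Fin n, (j : ℕ) * countOp n y j = ∑ i : Fin n, if y i < n then y i else 0 := by
  simp only [countOp, card_filter, Finset.mul_sum, mul_ite, mul_one, mul_zero]
  rw [Finset.sum_comm]
  refine Finset.sum_congr rfl fun i _ => ?_
  rw [Fin.sum_univ_eq_sum_range (fun j => if y i = j then j else 0) n,
      Finset.sum_ite_eq (Finset.range n) (y i) (fun j => j)]
  simp [Finset.mem_range]

lemma countOp_le (n : ℕ) (y : Fin n → ℕ) (j : Fin n) : countOp n y j ≤ n := by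
  simpa [countOp] using (Finset.card_filter_le Finset.univ (fun i : Fin n => y i = (j : ℕ))).trans
    (by simp)

lemma countOp_eq_n (n : ℕ) (y : Fin n → ℕ) (j : Fin n) (h : countOp n y j = n) :
    ∀ i, y i = (j : ℕ) := by
  intro i
  have h' : (Finset.univ.filter fun i : Fin n => y i = (j : ℕ)) = Finset.univ := by
    apply Finset.eq_univ_of_card
    simpa [countOp] using h
  have := Finset.mem_univ i
  rw [← h', Finset.mem_filter] at this
  exact this.2

theorem circuit_sums (n : ℕ) (hn : 4 ≤ n) (x : Fin n → ℕ) (hx : x ∈ NSet n)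
    (hcirc : ∃ l, 1 ≤ l ∧ (countOp n)^[l] x = x) :
    (∑ j : Fin n, x j = n) ∧ (∑ j : Fin n, (j : ℕ) * x j = n) ∧
      x ⟨0, by omega⟩ = ∑ j : Fin n, ((j : ℕ) - 1) * x j := by
  obtain ⟨hlt, hnc, hni⟩ := hx
  obtain ⟨l, hl, hper⟩ := hcirc
  set T := countOp n with hT
  have hper' : ∀ k, T^[k + l] x = T^[k] x := by
    intro k
    rw [Function.iterate_add_apply, hper]
  have hpred : ∀ k, T^[k] x = T (T^[k + 2 * l - 1] x) := by
    intro k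
    have h1 : T^[(k + 2 * l - 1) + 1] x = T^[k] x := by
      have e : (k + 2 * l - 1) + 1 = (k + l) + l := by omega
      rw [e, hper', hper']
    rw [← h1, Function.iterate_succ_apply']
  -- no element of the circuit is constant
  have noconst : ∀ k, ¬ ∃ c, ∀ i, T^[k] x i = c := by
    intro k ⟨c, hc⟩
    set u := T^[k + 2 * l - 1] x with hu
    have hzu : T^[k] x = T u := hpred k
    have hsum : n * c = (univ.filter fun i : Fin n => u i < n).card := by
      calc n * c = ∑ _j : Fin n, c := by simp [mul_comm]
        _ = ∑ j : Fin n, T^[k] x j := by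
            exact (Finset.sum_congr rfl fun j _ => (hc j).symm)
        _ = ∑ j : Fin n, countOp n u j := by rw [hzu, hT]
        _ = _ := countOp_sum n u
    have hcard : (univ.filter fun i : Fin n => u i < n).card ≤ n := by
      exact (Finset.card_filter_le _ _).trans (by simp)
    have hc1 : c ≤ 1 := by
      by_contra h
      push_neg at h
      have : n * 2 ≤ n * c := Nat.mul_le_mul_left n h
      omega
    -- predecessor of u
    have huv : u = T (T^[(k + 2 * l - 1) + 2 * l - 1] x) := hpred (k + 2 * l - 1)
    set v := T^[(k + 2 * l - 1) + 2 * l - 1] x with hv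
    interval_cases c
    · -- c = 0 : all u i ≥ n, but u values ≤ n so u i = n, forcing v constant = 0 and = 1
      have hall : ∀ i : Fin n, ¬ u i < n := by
        have h0 : (univ.filter fun i : Fin n => u i < n).card = 0 := by omega
        intro i hi
        have : i ∈ (univ.filter fun i : Fin n => u i < n) := by simp [hi]
        rw [Finset.card_eq_zero.mp h0] at this
        simp at this
      have hle : ∀ i : Fin n, u i ≤ n := by
        intro i; rw [huv, hT]; exact countOp_le n v i
      set i0 : Fin n := ⟨0, by omega⟩ with hi0
      set i1 : Fin n := ⟨1, by omega⟩ with hi1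
      have h0 : u i0 = n := by
        have := hall i0; have := hle i0; omega
      have h1 : u i1 = n := by
        have := hall i1; have := hle i1; omega
      have hv0 : v i0 = (i0 : ℕ) := by
        refine countOp_eq_n n v i0 ?_ i0
        rw [← hT, ← congrFun huv i0]; exact h0
      have hv1 : v i0 = (i1 : ℕ) := by
        refine countOp_eq_n n v i1 ?_ i0
        rw [← hT, ← congrFun huv i1]; exact h1
      rw [hv0] at hv1
      simp [hi0, hi1] at hv1
    · -- c = 1 : u is a bijection onto {0,...,n-1}, sum too big
      have hallu : ∀ i : Fin n, u i < n := by
        have hcard' : (univ.filter fun i : Fin n => u i < n).card = n := by omega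
        have h' : (univ.filter fun i : Fin n => u i < n) = univ := by
          apply Finset.eq_univ_of_card; simpa using hcard'
        intro i
        have := Finset.mem_univ i
        rw [← h', Finset.mem_filter] at this
        exact this.2
      have hw : ∑ j : Fin n, (j : ℕ) = ∑ i : Fin n, u i := by
        calc ∑ j : Fin n, (j : ℕ) = ∑ j : Fin n, (j : ℕ) * T^[k] x j := by
              refine Finset.sum_congr rfl fun j _ => ?_
              rw [hc j, mul_one]
          _ = ∑ j : Fin n, (j : ℕ) * countOp n u j := by rw [hzu, hT]
          _ = ∑ i : Fin n, if u i < n then u i else 0 := countOp_wsum n u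
          _ = ∑ i : Fin n, u i := by
              refine Finset.sum_congr rfl fun i _ => if_pos (hallu i)
      have hub : ∑ i : Fin n, u i ≤ n := by
        calc ∑ i : Fin n, u i = ∑ i : Fin n, countOp n v i := by rw [huv, hT]
          _ = (univ.filter fun i : Fin n => v i < n).card := countOp_sum n v
          _ ≤ n := (Finset.card_filter_le _ _).trans (by simp)
      have hgauss : (∑ j : Fin n, (j : ℕ)) * 2 = n * (n - 1) := by
        rw [Fin.sum_univ_eq_sum_range (fun j => j) n]
        rw [Finset.sum_range_id_mul_two]
      have h4 : n * 3 ≤ n * (n - 1) := Nat.mul_le_mul_left n (by omega)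
      omega
  -- all values of circuit elements are < n
  have hlt_all : ∀ k (j : Fin n), T^[k] x j < n := by
    intro k j
    have h := hpred k
    have hle : T^[k] x j ≤ n := by
      rw [h, hT]; exact countOp_le n _ j
    rcases lt_or_eq_of_le hle with h' | h'
    · exact h'
    · exfalso
      apply noconst (k + 2 * l - 1)
      exact ⟨(j : ℕ), countOp_eq_n n _ j (by rw [← hT, ← congrFun h j]; exact h')⟩
  -- now the main computations
  have hx0 : x = T^[0] x := rfl
  have hxu : x = T (T^[0 + 2 * l - 1] x) := hpred 0
  set u := T^[0 + 2 * l - 1] x with hu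
  have hallu : ∀ i : Fin n, u i < n := hlt_all _
  have huv : u = T (T^[(0 + 2 * l - 1) + 2 * l - 1] x) := hpred (0 + 2 * l - 1)
  set v := T^[(0 + 2 * l - 1) + 2 * l - 1] x with hv
  have hallv : ∀ i : Fin n, v i < n := hlt_all _
  have hfiltu : (univ.filter fun i : Fin n => u i < n) = univ :=
    Finset.filter_true_of_mem (fun i _ => hallu i)
  have hfiltv : (univ.filter fun i : Fin n => v i < n) = univ :=
    Finset.filter_true_of_mem (fun i _ => hallv i)
  have hs1 : ∑ j : Fin n, x j = n := by
    calc ∑ j : Fin n, x j = ∑ j : Fin n, countOp n u j := by rw [hxu, hT]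
      _ = (univ.filter fun i : Fin n => u i < n).card := countOp_sum n u
      _ = n := by rw [hfiltu]; simp
  have hsu : ∑ i : Fin n, u i = n := by
    calc ∑ i : Fin n, u i = ∑ i : Fin n, countOp n v i := by rw [huv, hT]
      _ = (univ.filter fun i : Fin n => v i < n).card := countOp_sum n v
      _ = n := by rw [hfiltv]; simp
  have hs2 : ∑ j : Fin n, (j : ℕ) * x j = n := by
    calc ∑ j : Fin n, (j : ℕ) * x j = ∑ j : Fin n, (j : ℕ) * countOp n u j := by rw [hxu, hT]
      _ = ∑ i : Fin n, if u i < n then u i else 0 := countOp_wsum n u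
      _ = ∑ i : Fin n, u i := Finset.sum_congr rfl fun i _ => if_pos (hallu i)
      _ = n := hsu
  refine ⟨hs1, hs2, ?_⟩
  -- algebra: x 0 = ∑ (j-1) x j
  have key : ∑ j : Fin n, (j : ℕ) * x j + x ⟨0, by omega⟩
      = ∑ j : Fin n, ((j : ℕ) - 1) * x j + ∑ j : Fin n, x j := by
    have step : ∀ j : Fin n, (j : ℕ) * x j + (if j = ⟨0, by omega⟩ then x j else 0)
        = ((j : ℕ) - 1) * x j + x j := by
      intro j
      by_cases h : j = ⟨0, by omega⟩
      · subst h; simp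
      · rw [if_neg h]
        have hj : 1 ≤ (j : ℕ) := by
          rcases Nat.eq_zero_or_pos (j : ℕ) with h0 | h0
          · exact absurd (Fin.ext h0) h
          · exact h0
        obtain ⟨m, hm⟩ : ∃ m, (j : ℕ) = m + 1 := ⟨(j : ℕ) - 1, by omega⟩
        rw [hm, Nat.add_sub_cancel]
        ring
    calc ∑ j : Fin n, (j : ℕ) * x j + x ⟨0, by omega⟩
        = ∑ j : Fin n, ((j : ℕ) * x j + (if j = ⟨0, by omega⟩ then x j else 0)) := by
          rw [Finset.sum_add_distrib, Finset.sum_ite_eq' Finset.univ ⟨0, by omega⟩ x]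
          simp
      _ = ∑ j : Fin n, (((j : ℕ) - 1) * x j + x j) := Finset.sum_congr rfl fun j _ => step j
      _ = _ := by rw [Finset.sum_add_distrib]
  omega
end

section
/- For every integer n ≥ 4, the image of 𝒩 under the counting operator is s(𝒩) = { x ∈ 𝒩 | ∑_{j=0}^{n-1} x_j = n }. -/
def fibEquiv {n : ℕ} (x : Fin n → ℕ) (j : Fin n) :
    {p : Σ j' : Fin n, Fin (x j') // p.1 = j} ≃ Fin (x j) where
  toFun p := Fin.cast (congrArg x p.2) p.1.2
  invFun a := ⟨⟨j, a⟩, rfl⟩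
  left_inv p := by obtain ⟨⟨j', a⟩, h⟩ := p; subst h; rfl
  right_inv a := rfl

lemma countOp_of_equiv {n : ℕ} (x : Fin n → ℕ) (e : Fin n ≃ (Σ j : Fin n, Fin (x j))) :
    countOp n (fun i => ((e i).1 : ℕ)) = x := by
  funext j
  have h0 : ((Finset.univ : Finset (Fin n)).filter fun i => ((e i).1 : ℕ) = (j : ℕ)) =
      (Finset.univ.filter fun i => (e i).1 = j) := by
    apply Finset.filter_congr; intro i _; simp [Fin.val_eq_val]
  rw [countOp, h0, ← Fintype.card_subtype]
  exact (Fintype.card_congr (e.subtypeEquiv (fun i => Iff.rfl))).trans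
    ((Fintype.card_congr (fibEquiv x j)).trans (Fintype.card_fin _))

lemma sum_countOp {n : ℕ} (y : Fin n → ℕ) (hy : ∀ i, y i < n) :
    ∑ j : Fin n, countOp n y j = n := by
  have := Finset.card_eq_sum_card_fiberwise
    (f := fun i => (⟨y i, hy i⟩ : Fin n)) (s := Finset.univ) (t := Finset.univ)
    (fun i _ => Finset.mem_univ _)
  rw [Finset.card_univ, Fintype.card_fin] at this
  refine Eq.trans ?_ this.symm
  apply Finset.sum_congr rfl
  intro j _
  unfold countOp
  congr 1
  apply Finset.filter_congr
  intro i _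
  simp [Fin.ext_iff]

theorem image_NSet (n : ℕ) (hn : 4 ≤ n) :
    countOp n '' NSet n = {x ∈ NSet n | ∑ j : Fin n, x j = n} := by
  have hn0 : 0 < n := by omega
  ext x
  constructor
  · rintro ⟨y, ⟨hy1, hy2, hy3⟩, rfl⟩
    have hsum : ∑ j : Fin n, countOp n y j = n := sum_countOp y hy1
    have hlt : ∀ j, countOp n y j < n := by
      intro j
      refine lt_of_le_of_ne ?_ ?_
      · calc (Finset.univ.filter fun i => y i = (j : ℕ)).card
            ≤ (Finset.univ : Finset (Fin n)).card := Finset.card_filter_le _ _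
          _ = n := by simp
      · intro h
        have huniv : (Finset.univ.filter fun i => y i = (j : ℕ)) = Finset.univ := by
          apply Finset.eq_univ_of_card
          simpa [countOp] using h
        refine hy2 ⟨(j : ℕ), fun i => ?_⟩
        have hi : i ∈ Finset.univ.filter fun i => y i = (j : ℕ) := by
          rw [huniv]; exact Finset.mem_univ i
        exact (Finset.mem_filter.mp hi).2
    refine ⟨⟨hlt, ?_, ?_⟩, hsum⟩
    · rintro ⟨c, hc⟩
      have hnc : n * c = n := by
        calc n * c = ∑ _j : Fin n, c := by simp [mul_comm]
          _ = ∑ j : Fin n, countOp n y j := by simp [hc]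
          _ = n := hsum
      have hc1 : c = 1 := by
        rcases Nat.lt_or_ge c 1 with h | h
        · interval_cases c <;> omega
        · rcases Nat.lt_or_ge c 2 with h2 | h2
          · omega
          · nlinarith
      apply hy3
      intro i₁ i₂ h12
      have hj : y i₁ < n := hy1 i₁
      set j : Fin n := ⟨y i₁, hj⟩
      have hcard : (Finset.univ.filter fun i => y i = (j : ℕ)).card ≤ 1 := by
        rw [show (Finset.univ.filter fun i => y i = (j : ℕ)).card = countOp n y j from rfl,
          hc j, hc1]
      exact Finset.card_le_one.mp hcard i₁ (Finset.mem_filter.mpr ⟨Finset.mem_univ _, rfl⟩)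
        i₂ (Finset.mem_filter.mpr ⟨Finset.mem_univ _, h12.symm⟩)
    · intro hinj
      have himg : Finset.univ.image (countOp n y) = Finset.range n := by
        apply Finset.eq_of_subset_of_card_le
        · intro k hk
          simp only [Finset.mem_image] at hk
          obtain ⟨j, _, rfl⟩ := hk
          exact Finset.mem_range.mpr (hlt j)
        · rw [Finset.card_range, Finset.card_image_of_injective _ hinj]
          simp
      have heq : ∑ j : Fin n, countOp n y j = ∑ k ∈ Finset.range n, k := by
        rw [← himg, Finset.sum_image (fun a _ b _ h => hinj h)]
      rw [hsum] at heq
      have h2 : (∑ k ∈ Finset.range n, k) * 2 = n * (n - 1) := Finset.sum_range_id_mul_two n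
      rw [← heq] at h2
      have h3 : n - 1 = 2 := Nat.eq_of_mul_eq_mul_left hn0 (by omega)
      omega
  · rintro ⟨⟨hx1, hx2, hx3⟩, hsum⟩
    have hcard : Fintype.card (Σ j : Fin n, Fin (x j)) = Fintype.card (Fin n) := by
      rw [Fintype.card_sigma]
      simp only [Fintype.card_fin]
      rw [hsum]
    obtain e := (Fintype.equivOfCardEq hcard).symm
    refine ⟨fun i => ((e i).1 : ℕ), ⟨fun i => (e i).1.isLt, ?_, ?_⟩, countOp_of_equiv x e⟩
    · rintro ⟨c, hc⟩
      have hone : ∀ j₁ j₂ : Fin n, 0 < x j₁ → 0 < x j₂ → j₁ = j₂ := by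
        intro j₁ j₂ h₁ h₂
        have e1 : ((e (e.symm ⟨j₁, ⟨0, h₁⟩⟩)).1 : ℕ) = c := hc _
        have e2 : ((e (e.symm ⟨j₂, ⟨0, h₂⟩⟩)).1 : ℕ) = c := hc _
        rw [Equiv.apply_symm_apply] at e1 e2
        exact Fin.val_injective (e1.trans e2.symm)
      obtain ⟨j₀, hj₀⟩ : ∃ j₀ : Fin n, 0 < x j₀ := by
        by_contra h
        push_neg at h
        have hz : ∑ j : Fin n, x j = 0 :=
          Finset.sum_eq_zero (fun j _ => Nat.le_antisymm (h j) (Nat.zero_le _))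
        omega
      have hxn : x j₀ = n := by
        have hadd := Finset.add_sum_erase _ x (Finset.mem_univ j₀)
        rw [hsum] at hadd
        have hz : ∑ j ∈ Finset.univ.erase j₀, x j = 0 := by
          apply Finset.sum_eq_zero
          intro j hj
          by_contra h
          exact (Finset.mem_erase.mp hj).1 (hone j j₀ (Nat.pos_of_ne_zero h) hj₀)
        omega
      exact absurd hxn (Nat.ne_of_lt (hx1 j₀))
    · obtain ⟨j, hj⟩ : ∃ j : Fin n, 2 ≤ x j := by
        by_contra h
        push_neg at h
        have h1 : ∀ j : Fin n, x j = 1 := by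
          intro j
          have hle : ∑ i ∈ Finset.univ.erase j, x i ≤ n - 1 := by
            calc ∑ i ∈ Finset.univ.erase j, x i ≤ ∑ _i ∈ Finset.univ.erase j, 1 :=
                Finset.sum_le_sum (fun i _ => by have := h i; omega)
              _ = n - 1 := by simp [Finset.card_erase_of_mem]
          have hadd := Finset.add_sum_erase _ x (Finset.mem_univ j)
          rw [hsum] at hadd
          have := h j
          omega
        exact hx2 ⟨1, h1⟩
      intro hinj
      have hne : (⟨j, ⟨0, by omega⟩⟩ : Σ j' : Fin n, Fin (x j')) ≠ ⟨j, ⟨1, by omega⟩⟩ := by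
        simp
      apply hne
      apply e.symm.injective
      apply hinj
      show ((e (e.symm ⟨j, ⟨0, by omega⟩⟩)).1 : ℕ) = ((e (e.symm ⟨j, ⟨1, by omega⟩⟩)).1 : ℕ)
      rw [Equiv.apply_symm_apply, Equiv.apply_symm_apply]
end
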